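/- Let k ≥ 2 and n be natural numbers and let V be a ground set with |V| = n. If there exists a MAS function F from the multisets over V of cardinality at most k to ℝ^m, then m ≥ log₂(log₃ n); equivalently, n ≤ 3^{2^m}. -/

import Mathlib

open Function Finset

namespace MASAux

variable {α : Type*} [LinearOrder α]

/-- Erdős–Szekeres, copied from Mathlib's Archive. -/
theorem erdos_szekeres {r s n : ℕ} {f : Fin n → α} (hn : r * s < n) (hf : Injective f) :
    (∃ t : Finset (Fin n), r < #t ∧ StrictMonoOn f ↑t) ∨
      ∃ t : Finset (Fin n), s < #t ∧ StrictAntiOn f ↑t := by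
  let inc_sequences_ending_in : Fin n → Finset (Finset (Fin n)) := fun i =>
    univ.powerset.filter fun t => Finset.max t = i ∧ StrictMonoOn f ↑t
  let dec_sequences_ending_in : Fin n → Finset (Finset (Fin n)) := fun i =>
    univ.powerset.filter fun t => Finset.max t = i ∧ StrictAntiOn f ↑t
  have inc_i : ∀ i, {i} ∈ inc_sequences_ending_in i := fun i => by
    simp [inc_sequences_ending_in, StrictMonoOn]
  have dec_i : ∀ i, {i} ∈ dec_sequences_ending_in i := fun i => by
    simp [dec_sequences_ending_in, StrictAntiOn]
  let ab' : Fin n → ℕ × ℕ := by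
    intro i
    apply
      (max' ((inc_sequences_ending_in i).image card) (Nonempty.image ⟨{i}, inc_i i⟩ _),
        max' ((dec_sequences_ending_in i).image card) (Nonempty.image ⟨{i}, dec_i i⟩ _))
  generalize hab : ab' = ab
  rsuffices ⟨i, hi⟩ : ∃ i, r < (ab i).1 ∨ s < (ab i).2
  · refine Or.imp ?_ ?_ hi
    on_goal 1 =>
      have : (ab i).1 ∈ image card (inc_sequences_ending_in i) := by
        simp only [← hab]; exact max'_mem _ (Nonempty.image ⟨{i}, inc_i i⟩ _)
    on_goal 2 =>
      have : (ab i).2 ∈ image card (dec_sequences_ending_in i) := by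
        simp only [← hab]; exact max'_mem _ (Nonempty.image ⟨{i}, dec_i i⟩ _)
    all_goals
      intro hi
      rw [mem_image] at this
      obtain ⟨t, ht₁, ht₂⟩ := this
      refine ⟨t, by rwa [ht₂], ?_⟩
      rw [mem_filter] at ht₁
      apply ht₁.2.2
  have : Injective ab := by
    simp only [← hab]
    apply Function.Injective.of_lt_imp_ne
    intro i j k q
    injection q with q₁ q₂
    cases lt_or_gt_of_ne fun _ => ne_of_lt ‹i < j› (hf ‹f i = f j›)
    on_goal 1 =>
      apply ne_of_lt _ q₁
      have : (ab' i).1 ∈ image card (inc_sequences_ending_in i) := by exact max'_mem _ (Nonempty.image ⟨{i}, inc_i i⟩ _)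
    on_goal 2 =>
      apply ne_of_lt _ q₂
      have : (ab' i).2 ∈ image card (dec_sequences_ending_in i) := by exact max'_mem _ (Nonempty.image ⟨{i}, dec_i i⟩ _)
    all_goals
      rw [Nat.lt_iff_add_one_le]
      apply le_max'
      rw [mem_image] at this ⊢
      rcases this with ⟨t, ht₁, ht₂⟩
      rw [mem_filter] at ht₁
      have : t.max = i := by simp only [ht₁.2.1]
      refine ⟨insert j t, ?_, ?_⟩
      · rw [mem_filter]
        refine ⟨?_, ?_, ?_⟩
        · rw [mem_powerset]; apply subset_univ
        · convert max_insert (a := j) (s := t)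
          rw [ht₁.2.1, max_eq_left]
          apply WithBot.coe_le_coe.mpr (le_of_lt ‹i < j›)
        simp only [StrictMonoOn, StrictAntiOn, coe_insert, Set.mem_insert_iff, mem_coe]
        rintro x ⟨rfl | _⟩ y ⟨rfl | _⟩ _
        · apply (irrefl _ ‹j < j›).elim
        · exfalso
          apply not_le_of_gt (_root_.trans ‹i < j› ‹j < y›) (le_max_of_eq ‹y ∈ t› ‹t.max = i›)
        · first
          | apply lt_of_le_of_lt _ ‹f i < f j›
          | apply lt_of_lt_of_le ‹f j < f i› _
          rcases lt_or_eq_of_le (le_max_of_eq ‹x ∈ t› ‹t.max = i›) with (_ | rfl)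
          · apply le_of_lt (ht₁.2.2 ‹x ∈ t› (mem_of_max ‹t.max = i›) ‹x < i›)
          · rfl
        · apply ht₁.2.2 ‹x ∈ t› ‹y ∈ t› ‹x < y›
      · rw [card_insert_of_notMem, ht₂]
        intro
        apply not_le_of_gt ‹i < j› (le_max_of_eq ‹j ∈ t› ‹t.max = i›)
  by_contra! q
  let ran : Finset (ℕ × ℕ) := (range r).image Nat.succ ×ˢ (range s).image Nat.succ
  have : image ab univ ⊆ ran := by
    rintro ⟨x₁, x₂⟩
    simp only [ran, mem_image, exists_prop, mem_range, mem_univ, mem_product, true_and,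
      Prod.ext_iff]
    rintro ⟨i, rfl, rfl⟩
    specialize q i
    have z : 1 ≤ (ab i).1 ∧ 1 ≤ (ab i).2 := by
      simp only [← hab]
      constructor <;>
        · apply le_max'
          rw [mem_image]
          exact ⟨{i}, by solve_by_elim, card_singleton i⟩
    exact ⟨⟨(ab i).1 - 1, by omega⟩, (ab i).2 - 1, by omega⟩
  apply not_le_of_gt hn
  simpa [ran, Nat.succ_injective, card_image_of_injective, ‹Injective ab›] using card_le_card this

lemma lex_fst_mono {n : ℕ} {x y : ℝ × Fin n} (h : toLex x < toLex y) : x.1 ≤ y.1 := by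
  rcases Prod.Lex.lt_iff.1 h with h' | h'
  · exact le_of_lt h'
  · exact le_of_eq h'.1

/-- Key combinatorial lemma: if a finite sequence of points in `ℝ^m` has the
"interval exclusion" property — for all `i < j` there is a point `q` dominating
`z i` and `z j` but dominating no `z k` with `i < k < j` — then there are at
most `2 ^ 2 ^ m` points. -/
theorem interval_lemma :
    ∀ (m n : ℕ) (z : Fin n → Fin m → ℝ),
      (∀ i j : Fin n, i < j → ∃ q : Fin m → ℝ, z i ≤ q ∧ z j ≤ q ∧
        ∀ k : Fin n, i < k → k < j → ¬ z k ≤ q) → n ≤ 2 ^ 2 ^ m := by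
  intro m
  induction m with
  | zero =>
    intro n z hP
    by_contra hbig
    push_neg at hbig
    have h3 : 2 < n := by simpa using hbig
    obtain ⟨q, -, -, hex⟩ := hP ⟨0, by omega⟩ ⟨2, by omega⟩ (by simp [Fin.lt_def])
    exact hex ⟨1, by omega⟩ (by simp [Fin.lt_def]) (by simp [Fin.lt_def])
      (fun t => t.elim0)
  | succ m ih =>
    intro n z hP
    by_contra hbig
    push_neg at hbig
    set s := 2 ^ 2 ^ m with hs
    have hssn : s * s < n := by
      have h2 : s * s = 2 ^ 2 ^ (m + 1) := by
        rw [← pow_add]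
        congr 1
        omega
      omega
    -- apply Erdős–Szekeres to the last coordinates, made injective via lex pairs
    let f : Fin n → ℝ ×ₗ (Fin n) := fun i => toLex (z i (Fin.last m), i)
    have hf : Injective f := by
      intro i j h
      simpa [f] using congrArg (fun x => (ofLex x).2) h
    have key : ∀ (g : Fin (s + 1) → Fin n), StrictMono g →
        (∀ a c b : Fin (s + 1), a ≤ c → c ≤ b →
          z (g c) (Fin.last m) ≤ max (z (g a) (Fin.last m)) (z (g b) (Fin.last m))) →
        False := by
      intro g hg hmid
      set z' : Fin (s + 1) → Fin m → ℝ := fun a t => z (g a) t.castSucc with hz'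
      have hP' : ∀ a b : Fin (s + 1), a < b → ∃ q' : Fin m → ℝ, z' a ≤ q' ∧ z' b ≤ q' ∧
          ∀ c : Fin (s + 1), a < c → c < b → ¬ z' c ≤ q' := by
        intro a b hab
        obtain ⟨q, hqa, hqb, hex⟩ := hP (g a) (g b) (hg hab)
        refine ⟨fun t => q t.castSucc, fun t => hqa t.castSucc, fun t => hqb t.castSucc, ?_⟩
        intro c hac hcb hle
        refine hex (g c) (hg hac) (hg hcb) ?_
        intro t
        refine Fin.lastCases ?_ (fun i => hle i) t
        exact (hmid a c b hac.le hcb.le).trans (max_le (hqa _) (hqb _))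
      have := ih (s + 1) z' hP'
      omega
    rcases erdos_szekeres (f := f) (r := s) (s := s) hssn hf with ⟨t, hts, hmono⟩ | ⟨t, hts, hanti⟩
    · refine key (t.orderEmbOfCardLe hts) (t.orderEmbOfCardLe hts).strictMono ?_
      have hstep : ∀ a b : Fin (s + 1), a ≤ b →
          z (t.orderEmbOfCardLe hts a) (Fin.last m) ≤
            z (t.orderEmbOfCardLe hts b) (Fin.last m) := by
        intro a b hab
        rcases eq_or_lt_of_le hab with rfl | hab'
        · exact le_rfl
        exact lex_fst_mono (hmono (t.orderEmbOfCardLe_mem hts a)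
          (t.orderEmbOfCardLe_mem hts b) ((t.orderEmbOfCardLe hts).strictMono hab'))
      intro a c b hac hcb
      exact (hstep c b hcb).trans (le_max_right _ _)
    · refine key (t.orderEmbOfCardLe hts) (t.orderEmbOfCardLe hts).strictMono ?_
      have hstep : ∀ a b : Fin (s + 1), a ≤ b →
          z (t.orderEmbOfCardLe hts b) (Fin.last m) ≤
            z (t.orderEmbOfCardLe hts a) (Fin.last m) := by
        intro a b hab
        rcases eq_or_lt_of_le hab with rfl | hab'
        · exact le_rfl
        exact lex_fst_mono (hanti (t.orderEmbOfCardLe_mem hts a)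
          (t.orderEmbOfCardLe_mem hts b) ((t.orderEmbOfCardLe hts).strictMono hab'))
      intro a c b hac hcb
      exact (hstep a c hac).trans (le_max_left _ _)

end MASAux

/-- For `k ≥ 2` and a ground set `V` with `|V| = n`, if a MAS function
`F : P_{≤k}(V) → ℝ^m` exists, then `m ≥ log₂ log₃ n`, i.e. `n ≤ 3^(2^m)`. -/
theorem stmt3 (k n : ℕ) (hk : 2 ≤ k) (V : Type*) [Fintype V]
    (hV : Fintype.card V = n) (m : ℕ)
    (hF : ∃ F : {S : Multiset V // Multiset.card S ≤ k} → Fin m → ℝ,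
      (∀ S T, S.val ≤ T.val → F S ≤ F T) ∧
      (∀ S T, F S ≤ F T → S.val ≤ T.val)) :
    n ≤ 3 ^ 2 ^ m := by
  obtain ⟨F, hmono, hsep⟩ := hF
  have e : Fin n ≃ V := (Fintype.equivFinOfCardEq hV).symm
  have hsing : ∀ i : Fin n, Multiset.card ({e i} : Multiset V) ≤ k := by
    intro i; simp; omega
  have hpair : ∀ i j : Fin n, Multiset.card ({e i, e j} : Multiset V) ≤ k := by
    intro i j
    simp only [Multiset.insert_eq_cons, Multiset.card_cons, Multiset.card_singleton]
    omega
  set z : Fin n → Fin m → ℝ := fun i => F ⟨{e i}, hsing i⟩ with hz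
  have hP : ∀ i j : Fin n, i < j → ∃ q : Fin m → ℝ, z i ≤ q ∧ z j ≤ q ∧
      ∀ k' : Fin n, i < k' → k' < j → ¬ z k' ≤ q := by
    intro i j hij
    refine ⟨F ⟨{e i, e j}, hpair i j⟩, ?_, ?_, ?_⟩
    · exact hmono _ _ (Multiset.singleton_le.mpr (by simp))
    · exact hmono _ _ (Multiset.singleton_le.mpr (by simp))
    · intro k' hik hkj hle
      have := hsep _ _ hle
      have hm : e k' ∈ ({e i, e j} : Multiset V) := Multiset.singleton_le.mp this
      rw [Multiset.insert_eq_cons, Multiset.mem_cons, Multiset.mem_singleton] at hm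
      rcases hm with h | h
      · exact absurd (e.injective h) (by intro h'; subst h'; exact lt_irrefl _ hik)
      · exact absurd (e.injective h) (by intro h'; subst h'; exact lt_irrefl _ hkj)
  have h1 : n ≤ 2 ^ 2 ^ m := MASAux.interval_lemma m n z hP
  calc n ≤ 2 ^ 2 ^ m := h1
    _ ≤ 3 ^ 2 ^ m := Nat.pow_le_pow_left (by norm_num) _
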